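/- For every fixed integer t ≥ 4, τ_t(n) ≥ n^{2−o(1)}; that is, for every ε > 0 there exists N such that for all n ≥ N there is an almost t-Gallai colouring of E(K_n), using only C(t,2) colours, that contains at least n^{2−ε} rainbow t-cliques. -/

import Mathlib

/-- A set `S` of vertices of `K_n` is a rainbow `t`-clique for the edge colouring `c`
if it has `t` vertices and the colours of its edges are pairwise distinct. -/
def IsRainbowClique {n : ℕ} (t : ℕ) (c : Sym2 (Fin n) → ℕ) (S : Finset (Fin n)) : Prop :=
  S.card = t ∧
    ∀ a ∈ S, ∀ b ∈ S, ∀ x ∈ S, ∀ y ∈ S,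
      a ≠ b → x ≠ y → s(a, b) ≠ s(x, y) → c s(a, b) ≠ c s(x, y)

/-- A colouring of `E(K_n)` is almost `t`-Gallai if no two (distinct) rainbow `t`-cliques
share an edge. -/
def AlmostGallai {n : ℕ} (t : ℕ) (c : Sym2 (Fin n) → ℕ) : Prop :=
  ∀ S T : Finset (Fin n), IsRainbowClique t c S → IsRainbowClique t c T → S ≠ T →
    ∀ a b : Fin n, a ≠ b → a ∈ S → b ∈ S → a ∈ T → b ∈ T → False

/-- The number of rainbow `t`-cliques of the colouring `c` of `E(K_n)`. -/
noncomputable def rainbowCount {n : ℕ} (t : ℕ) (c : Sym2 (Fin n) → ℕ) : ℕ :=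
  {S : Finset (Fin n) | IsRainbowClique t c S}.ncard


open Finset

/-- colour index of the (ordered) pair `(i,j)`, `i < j`. -/
def pc (i j : ℕ) : ℕ := i + j.choose 2

lemma pc_lt_succ {i j : ℕ} (hij : i < j) : pc i j < (j+1).choose 2 := by
  have h : (j+1).choose 2 = j + j.choose 2 := by
    rw [Nat.choose_succ_succ j 1, Nat.choose_one_right]
  rw [h]; unfold pc; omega

lemma pc_lt {i j t : ℕ} (hij : i < j) (hjt : j < t) : pc i j < t.choose 2 :=
  lt_of_lt_of_le (pc_lt_succ hij) (Nat.choose_le_choose 2 hjt)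

lemma pc_01 : pc 0 1 = 0 := by decide

lemma pc_inj {i j i' j' : ℕ} (h : i < j) (h' : i' < j') (he : pc i j = pc i' j') :
    i = i' ∧ j = j' := by
  rcases lt_trichotomy j j' with hj | hj | hj
  · have h1 := pc_lt_succ h
    have h2 : (j+1).choose 2 ≤ j'.choose 2 := Nat.choose_le_choose 2 hj
    have h3 : j'.choose 2 ≤ pc i' j' := Nat.le_add_left _ _
    omega
  · subst hj; unfold pc at he; omega
  · have h1 := pc_lt_succ h'
    have h2 : (j'+1).choose 2 ≤ j.choose 2 := Nat.choose_le_choose 2 hj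
    have h3 : j.choose 2 ≤ pc i j := Nat.le_add_left _ _
    omega

lemma pc_ne_zero {i j : ℕ} (h : i < j) (hne : ¬(i = 0 ∧ j = 1)) : pc i j ≠ 0 := by
  unfold pc
  intro h0
  have hi : i = 0 := by omega
  have hc : j.choose 2 = 0 := by omega
  rw [Nat.choose_eq_zero_iff] at hc
  omega

/-- uniqueness of base-`d` representations. -/
lemma digits_inj : ∀ (k : ℕ) (d : ℕ), 0 < d → ∀ (x y : Fin k → ℕ),
    (∀ i, x i < d) → (∀ i, y i < d) →
    (∑ i, x i * d ^ (i : ℕ)) = (∑ i, y i * d ^ (i : ℕ)) → x = y := by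
  intro k
  induction k with
  | zero => intro d hd x y hx hy h; funext i; exact absurd i.2 (by omega)
  | succ k ih =>
    intro d hd x y hx hy h
    have hsum : ∀ z : Fin (k+1) → ℕ,
        (∑ i, z i * d ^ (i : ℕ)) = z 0 + d * ∑ i : Fin k, z i.succ * d ^ (i : ℕ) := by
      intro z
      rw [Fin.sum_univ_succ]
      congr 1
      · simp
      · rw [Finset.mul_sum]
        apply Finset.sum_congr rfl
        intro i _
        rw [Fin.val_succ, pow_succ]
        ring
    rw [hsum x, hsum y] at h
    have h0 : x 0 = y 0 := by
      have e1 : (x 0 + d * ∑ i : Fin k, x i.succ * d ^ (i:ℕ)) % d = x 0 := by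
        rw [Nat.add_mul_mod_self_left, Nat.mod_eq_of_lt (hx 0)]
      have e2 : (y 0 + d * ∑ i : Fin k, y i.succ * d ^ (i:ℕ)) % d = y 0 := by
        rw [Nat.add_mul_mod_self_left, Nat.mod_eq_of_lt (hy 0)]
      rw [← e1, ← e2, h]
    have hrest : (∑ i : Fin k, x i.succ * d ^ (i:ℕ)) = ∑ i : Fin k, y i.succ * d ^ (i:ℕ) := by
      have : d * (∑ i : Fin k, x i.succ * d ^ (i:ℕ)) = d * ∑ i : Fin k, y i.succ * d ^ (i:ℕ) := by
        omega
      exact Nat.eq_of_mul_eq_mul_left hd this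
    have := ih d hd (fun i => x i.succ) (fun i => y i.succ)
      (fun i => hx i.succ) (fun i => hy i.succ) hrest
    funext i
    rcases Fin.eq_zero_or_eq_succ i with h | ⟨j, rfl⟩
    · rw [h]; exact h0
    · exact congrFun this j

lemma encode_lt : ∀ (k : ℕ) (d : ℕ), 0 < d → ∀ (x : Fin k → ℕ),
    (∀ i, x i < d) → (∑ i, x i * d ^ (i : ℕ)) < d ^ k := by
  intro k
  induction k with
  | zero => intro d hd x hx; simp
  | succ k ih =>
    intro d hd x hx
    rw [Fin.sum_univ_succ]
    have h1 : (∑ i : Fin k, x i.succ * d ^ ((i.succ : Fin (k+1)) : ℕ))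
        = (∑ i : Fin k, x i.succ * d ^ (i:ℕ)) * d := by
      rw [Finset.sum_mul]
      apply Finset.sum_congr rfl
      intro i _
      rw [Fin.val_succ, pow_succ]
      ring
    rw [h1]
    have h2 := ih d hd (fun i => x i.succ) (fun i => hx i.succ)
    have h3 : (∑ i : Fin k, x i.succ * d ^ (i:ℕ)) * d ≤ (d^k - 1) * d :=
      Nat.mul_le_mul_right d (by omega)
    have h4 : 0 < d ^ k := Nat.pow_pos hd
    have h5 : x 0 * d ^ ((0 : Fin (k+1)) : ℕ) = x 0 := by simp
    rw [h5, pow_succ]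
    have := hx 0
    nlinarith [h3, h4]

/-- the sphere / convexity argument. -/
lemma sphere_eq {k : ℕ} (x y z : Fin k → ℕ) (l mu r : ℕ) (hl : 1 ≤ l) (hmu : 1 ≤ mu)
    (hpt : ∀ i, l * x i + mu * y i = (l + mu) * z i)
    (hx : ∑ i, (x i)^2 = r) (hy : ∑ i, (y i)^2 = r) (hz : ∑ i, (z i)^2 = r) :
    x = y := by
  -- work over ℤ
  have hxz : (∑ i, ((x i : ℤ))^2) = (r : ℤ) := by exact_mod_cast congrArg (Nat.cast : ℕ → ℤ) hx
  have hyz : (∑ i, ((y i : ℤ))^2) = (r : ℤ) := by exact_mod_cast congrArg (Nat.cast : ℕ → ℤ) hy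
  have hzz : (∑ i, ((z i : ℤ))^2) = (r : ℤ) := by exact_mod_cast congrArg (Nat.cast : ℕ → ℤ) hz
  have hsq : (∑ i, ((l : ℤ) * x i + mu * y i)^2) = ∑ i, ((l + mu : ℤ) * z i)^2 := by
    apply Finset.sum_congr rfl
    intro i _
    have := hpt i
    have : ((l : ℤ) * x i + mu * y i) = ((l + mu : ℤ) * z i) := by exact_mod_cast this
    rw [this]
  have hip : (∑ i, (x i : ℤ) * y i) = (r : ℤ) := by
    have e1 : (∑ i, ((l : ℤ) * x i + mu * y i)^2)
        = l^2 * (∑ i, ((x i : ℤ))^2) + 2 * l * mu * (∑ i, (x i : ℤ) * y i)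
          + mu^2 * (∑ i, ((y i : ℤ))^2) := by
      rw [Finset.mul_sum, Finset.mul_sum, Finset.mul_sum, ← Finset.sum_add_distrib,
        ← Finset.sum_add_distrib]
      apply Finset.sum_congr rfl
      intro i _; ring
    have e2 : (∑ i, ((l + mu : ℤ) * z i)^2) = (l+mu:ℤ)^2 * (∑ i, ((z i : ℤ))^2) := by
      rw [Finset.mul_sum]
      apply Finset.sum_congr rfl
      intro i _; ring
    rw [e1, e2, hxz, hyz, hzz] at hsq
    have hl' : (0:ℤ) < l := by exact_mod_cast hl
    have hmu' : (0:ℤ) < mu := by exact_mod_cast hmu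
    have h2 : 2 * (l:ℤ) * mu * (∑ i, (x i : ℤ) * y i) = 2 * (l:ℤ) * mu * r := by
      linear_combination hsq
    have hne : (2 * (l:ℤ) * mu) ≠ 0 := by positivity
    exact mul_left_cancel₀ hne h2
  have hzero : (∑ i, ((x i : ℤ) - y i)^2) = 0 := by
    have : (∑ i, ((x i : ℤ) - y i)^2)
        = (∑ i, ((x i : ℤ))^2) + (∑ i, ((y i : ℤ))^2) - 2 * (∑ i, (x i : ℤ) * y i) := by
      rw [Finset.mul_sum, ← Finset.sum_add_distrib, ← Finset.sum_sub_distrib]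
      apply Finset.sum_congr rfl
      intro i _; ring
    rw [this, hxz, hyz, hip]; ring
  funext i
  have h := (Finset.sum_eq_zero_iff_of_nonneg (fun i _ => sq_nonneg ((x i : ℤ) - y i))).mp
    hzero i (Finset.mem_univ i)
  have := pow_eq_zero_iff (n := 2) (by norm_num) |>.mp h
  have : (x i : ℤ) = y i := by omega
  exact_mod_cast this
section Construction

variable {n : ℕ} (t M : ℕ) (A : Finset ℕ)

/-- the relation defining coloured edges -/
def rel (u v : Fin n) : Prop :=
  u.val < t * M ∧ v.val < t * M ∧ u.val / M < v.val / M ∧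
    ∃ a ∈ A, v.val % M = u.val % M + (v.val / M - u.val / M) * a

open scoped Classical in
/-- the colour of the edge `{u,v}` -/
noncomputable def col (u v : Fin n) : ℕ :=
  if rel t M A u v then pc (u.val / M) (v.val / M)
  else if rel t M A v u then pc (v.val / M) (u.val / M)
  else 0

lemma rel_asymm {u v : Fin n} (h : rel t M A u v) : ¬ rel t M A v u := by
  intro h'
  have := h.2.2.1
  have := h'.2.2.1
  omega

lemma col_symm (u v : Fin n) : col t M A u v = col t M A v u := by
  unfold col
  by_cases h1 : rel t M A u v
  · rw [if_pos h1, if_neg (rel_asymm t M A h1), if_pos h1]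
  · by_cases h2 : rel t M A v u
    · rw [if_neg h1, if_pos h2, if_pos h2]
    · rw [if_neg h1, if_neg h2, if_neg h2, if_neg h1]

noncomputable def colC : Sym2 (Fin n) → ℕ :=
  Sym2.lift ⟨fun u v => col t M A u v, col_symm t M A⟩

@[simp] lemma colC_mk (u v : Fin n) : colC t M A s(u, v) = col t M A u v := rfl

lemma col_of_rel {u v : Fin n} (h : rel t M A u v) :
    col t M A u v = pc (u.val / M) (v.val / M) := by
  unfold col; rw [if_pos h]

lemma col_ne_zero {u v : Fin n} (h : col t M A u v ≠ 0) :
    rel t M A u v ∨ rel t M A v u := by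
  unfold col at h
  by_cases h1 : rel t M A u v
  · exact Or.inl h1
  · by_cases h2 : rel t M A v u
    · exact Or.inr h2
    · rw [if_neg h1, if_neg h2] at h; omega

lemma colC_lt (ht : 2 ≤ t) (hM : 0 < M) (e : Sym2 (Fin n)) : colC t M A e < t.choose 2 := by
  have hpos : 0 < t.choose 2 := Nat.choose_pos (by omega)
  induction e using Sym2.ind with
  | _ u v =>
    rw [colC_mk]
    rcases Classical.em (col t M A u v = 0) with h | h
    · omega
    · rcases col_ne_zero t M A h with hr | hr
      · rw [col_of_rel t M A hr]
        exact pc_lt hr.2.2.1 (Nat.div_lt_of_lt_mul (by rw [mul_comm]; exact hr.2.1))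
      · rw [col_symm, col_of_rel t M A hr]
        exact pc_lt hr.2.2.1 (Nat.div_lt_of_lt_mul (by rw [mul_comm]; exact hr.2.1))

end Construction
lemma edges_ne {α : Type*} {a b x y : α} (h : ¬(a = x ∧ b = y)) (h2 : ¬(a = y ∧ b = x)) :
    s(a,b) ≠ s(x,y) := by
  simp only [Ne, Sym2.eq_iff]; tauto

section Main

variable {n : ℕ} {t M : ℕ} {A : Finset ℕ}

lemma rainbow_structure (hM : 0 < M) (ht : 4 ≤ t)
    (hBeh : ∀ a1 ∈ A, ∀ a2 ∈ A, ∀ a3 ∈ A, ∀ l mu : ℕ, 1 ≤ l → 1 ≤ mu → l + mu ≤ t - 1 →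
      l * a1 + mu * a2 = (l + mu) * a3 → a1 = a2 ∧ a1 = a3)
    {S : Finset (Fin n)} (hS : IsRainbowClique t (colC t M A) S) :
    ∃ x a : ℕ, a ∈ A ∧ (∀ i, i < t → x + i * a < M) ∧
      ∀ v : Fin n, v ∈ S ↔ ∃ i, i < t ∧ v.val = i * M + (x + i * a) := by
  obtain ⟨hcard, hR⟩ := hS
  have hRR : ∀ u v u' v' : Fin n, u ∈ S → v ∈ S → u' ∈ S → v' ∈ S → u ≠ v → u' ≠ v' →
      s(u,v) ≠ s(u',v') → col t M A u v ≠ col t M A u' v' := by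
    intro u v u' v' hu hv hu' hv' h1 h2 h3
    exact hR u hu v hv u' hu' v' hv' h1 h2 h3
  -- Step A: all vertices valid
  have hvalid : ∀ v ∈ S, v.val < t * M := by
    intro v hv
    by_contra hbad
    have h2 : 2 ≤ (S.erase v).card := by rw [Finset.card_erase_of_mem hv]; omega
    obtain ⟨w1, hw1⟩ := Finset.card_pos.mp (by omega : 0 < (S.erase v).card)
    have h3 : 0 < ((S.erase v).erase w1).card := by
      rw [Finset.card_erase_of_mem hw1]; omega
    obtain ⟨w2, hw2⟩ := Finset.card_pos.mp h3
    have hw2' : w2 ∈ S.erase v := Finset.mem_of_mem_erase hw2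
    have hw1v : w1 ≠ v := Finset.ne_of_mem_erase hw1
    have hw2v : w2 ≠ v := Finset.ne_of_mem_erase hw2'
    have hw12 : w2 ≠ w1 := Finset.ne_of_mem_erase hw2
    have hz : ∀ w : Fin n, col t M A v w = 0 := by
      intro w
      unfold col
      rw [if_neg (fun hrel => hbad hrel.1), if_neg (fun hrel => hbad hrel.2.1)]
    exact hRR v w1 v w2 hv (Finset.mem_of_mem_erase hw1) hv (Finset.mem_of_mem_erase hw2')
      (Ne.symm hw1v) (Ne.symm hw2v)
      (edges_ne (fun h => hw12 h.2.symm) (fun h => hw2v h.1.symm))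
      (by rw [hz w1, hz w2])
  -- Step B: parts pairwise distinct
  have hpart : ∀ u ∈ S, ∀ v ∈ S, u ≠ v → u.val / M ≠ v.val / M := by
    intro u hu v hv huv
    by_contra hp
    have hcuv : col t M A u v = 0 := by
      unfold col
      rw [if_neg (fun hrel => absurd hrel.2.2.1 (by omega)),
        if_neg (fun hrel => absurd hrel.2.2.1 (by omega))]
    have h2 : 0 < ((S.erase u).erase v).card := by
      rw [Finset.card_erase_of_mem (Finset.mem_erase.mpr ⟨Ne.symm huv, hv⟩),
        Finset.card_erase_of_mem hu]
      omega
    obtain ⟨w, hw⟩ := Finset.card_pos.mp h2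
    have hwv : w ≠ v := Finset.ne_of_mem_erase hw
    have hwu : w ≠ u := Finset.ne_of_mem_erase (Finset.mem_of_mem_erase hw)
    have hwS : w ∈ S := Finset.mem_of_mem_erase (Finset.mem_of_mem_erase hw)
    have key : col t M A u w = 0 ∨ col t M A v w = 0 := by
      by_contra hboth
      push_neg at hboth
      have hequal : col t M A u w = col t M A v w := by
        rcases col_ne_zero t M A hboth.1 with hr | hr
        · rcases col_ne_zero t M A hboth.2 with hr' | hr'
          · rw [col_of_rel t M A hr, col_of_rel t M A hr', hp]
          · exact absurd hr'.2.2.1 (by have := hr.2.2.1; omega)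
        · rcases col_ne_zero t M A hboth.2 with hr' | hr'
          · exact absurd hr'.2.2.1 (by have := hr.2.2.1; omega)
          · rw [col_symm t M A u w, col_symm t M A v w, col_of_rel t M A hr,
              col_of_rel t M A hr', hp]
      exact hRR u w v w hu hwS hv hwS (Ne.symm hwu) (Ne.symm hwv)
        (edges_ne (fun h => huv h.1) (fun h => hwu h.1.symm))
        hequal
    rcases key with h0 | h0
    · exact hRR u v u w hu hv hu hwS huv (Ne.symm hwu)
        (edges_ne (fun h => hwv h.2.symm) (fun h => hwu h.1.symm)) (by rw [hcuv, h0])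
    · exact hRR u v v w hu hv hv hwS huv (Ne.symm hwv)
        (edges_ne (fun h => huv h.1) (fun h => hwu h.1.symm)) (by rw [hcuv, h0])
  -- the vertex in each part
  have hinj : Set.InjOn (fun v : Fin n => v.val / M) ↑S := by
    intro u hu v hv h
    by_contra hne
    exact hpart u hu v hv hne h
  have himg : S.image (fun v => v.val / M) = Finset.range t := by
    apply Finset.eq_of_subset_of_card_le
    · intro i hi
      obtain ⟨v, hv, rfl⟩ := Finset.mem_image.mp hi
      exact Finset.mem_range.mpr (Nat.div_lt_of_lt_mul (by rw [mul_comm]; exact hvalid v hv))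
    · rw [Finset.card_image_of_injOn hinj, hcard, Finset.card_range]
  have hS0 : S.Nonempty := by rw [← Finset.card_pos, hcard]; omega
  obtain ⟨v0, hv0⟩ := hS0
  have hsurj : ∀ i : ℕ, ∃ v, v ∈ S ∧ (i < t → v.val / M = i) := by
    intro i
    by_cases hi : i < t
    · have : i ∈ S.image (fun v => v.val / M) := by
        rw [himg]; exact Finset.mem_range.mpr hi
      obtain ⟨v, hv, he⟩ := Finset.mem_image.mp this
      exact ⟨v, hv, fun _ => he⟩
    · exact ⟨v0, hv0, fun h => absurd h hi⟩
  choose w hwS hwp using hsurj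
  have hwne : ∀ i j, i < t → j < t → i ≠ j → w i ≠ w j := by
    intro i j hi hj hij h
    apply hij
    rw [← hwp i hi, ← hwp j hj, h]
  -- the (0,1) edge has colour 0
  have h01 : col t M A (w 0) (w 1) = 0 := by
    by_cases h : rel t M A (w 0) (w 1)
    · rw [col_of_rel t M A h, hwp 0 (by omega), hwp 1 (by omega), pc_01]
    · by_cases h' : rel t M A (w 1) (w 0)
      · exact absurd h'.2.2.1 (by rw [hwp 0 (by omega), hwp 1 (by omega)]; omega)
      · unfold col; rw [if_neg h, if_neg h']
  -- every other pair is a rel-edge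
  have hedge : ∀ i j, i < j → j < t → ¬(i = 0 ∧ j = 1) →
      ∃ a ∈ A, (w j).val % M = (w i).val % M + (j - i) * a := by
    intro i j hij hjt h01'
    have hi : i < t := by omega
    have hwij : w i ≠ w j := hwne i j hi hjt (by omega)
    have hcnz : col t M A (w i) (w j) ≠ 0 := by
      intro h0
      apply hRR (w i) (w j) (w 0) (w 1) (hwS i) (hwS j) (hwS 0) (hwS 1) hwij
        (hwne 0 1 (by omega) (by omega) (by omega)) ?_ (by rw [h0, h01])
      apply edges_ne
      · rintro ⟨h1, h2⟩
        have e1 : i = 0 := by rw [← hwp i hi, h1, hwp 0 (by omega)]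
        have e2 : j = 1 := by rw [← hwp j hjt, h2, hwp 1 (by omega)]
        exact h01' ⟨e1, e2⟩
      · rintro ⟨h1, h2⟩
        have e1 : i = 1 := by rw [← hwp i hi, h1, hwp 1 (by omega)]
        have e2 : j = 0 := by rw [← hwp j hjt, h2, hwp 0 (by omega)]
        omega
    have hr : rel t M A (w i) (w j) := by
      rcases col_ne_zero t M A hcnz with hr | hr
      · exact hr
      · exact absurd hr.2.2.1 (by rw [hwp i hi, hwp j hjt]; omega)
    obtain ⟨h1, h2, h3, a, ha, he⟩ := hr
    refine ⟨a, ha, ?_⟩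
    rwa [hwp i hi, hwp j hjt] at he
  -- triangle lemma
  have tri : ∀ i j k aij ajk aik, i < j → j < k → k < t →
      aij ∈ A → ajk ∈ A → aik ∈ A →
      (w j).val % M = (w i).val % M + (j-i) * aij →
      (w k).val % M = (w j).val % M + (k-j) * ajk →
      (w k).val % M = (w i).val % M + (k-i) * aik →
      aij = ajk ∧ aij = aik := by
    intro i j k aij ajk aik hij hjk hkt hA1 hA2 hA3 e1 e2 e3
    have hsum : (j-i) * aij + (k-j) * ajk = (k-i) * aik := by omega
    have h5 : k - i = (j-i) + (k-j) := by omega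
    rw [h5] at hsum
    exact hBeh aij hA1 ajk hA2 aik hA3 (j-i) (k-j) (by omega) (by omega) (by omega) hsum
  -- gather data
  obtain ⟨a, haA, h02⟩ := hedge 0 2 (by omega) (by omega) (by omega)
  obtain ⟨a23, h23A, h23⟩ := hedge 2 3 (by omega) (by omega) (by omega)
  obtain ⟨a03, h03A, h03⟩ := hedge 0 3 (by omega) (by omega) (by omega)
  obtain ⟨a12, h12A, h12⟩ := hedge 1 2 (by omega) (by omega) (by omega)
  obtain ⟨a13, h13A, h13⟩ := hedge 1 3 (by omega) (by omega) (by omega)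
  have t023 := tri 0 2 3 a a23 a03 (by omega) (by omega) (by omega) haA h23A h03A h02 h23 h03
  have key : ∀ i, i < t → (w i).val % M = (w 0).val % M + i * a := by
    intro i hi
    by_cases hi0 : i = 0
    · subst hi0; omega
    by_cases hi2 : i = 2
    · subst hi2
      have := h02; omega
    by_cases hi1 : i = 1
    · subst hi1
      have t123 := tri 1 2 3 a12 a23 a13 (by omega) (by omega) (by omega) h12A h23A h13A
        h12 h23 h13
      have ha12 : a12 = a := by rw [t123.1, ← t023.1]
      rw [ha12] at h12
      omega
    · -- i ≥ 3
      have hi3 : 3 ≤ i := by omega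
      obtain ⟨a2i, h2iA, h2i⟩ := hedge 2 i (by omega) hi (by omega)
      obtain ⟨a0i, h0iA, h0i⟩ := hedge 0 i (by omega) hi (by omega)
      have t02i := tri 0 2 i a a2i a0i (by omega) (by omega) hi haA h2iA h0iA h02 h2i h0i
      rw [← t02i.2, Nat.sub_zero] at h0i
      exact h0i
  refine ⟨(w 0).val % M, a, haA, ?_, ?_⟩
  · intro i hi
    rw [← key i hi]
    exact Nat.mod_lt _ hM
  · intro v
    constructor
    · intro hv
      have hlt : v.val / M < t := Nat.div_lt_of_lt_mul (by rw [mul_comm]; exact hvalid v hv)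
      refine ⟨v.val / M, hlt, ?_⟩
      have hvw : v = w (v.val / M) :=
        hinj hv (hwS (v.val / M))
          (by show v.val / M = (w (v.val / M)).val / M; rw [hwp _ hlt])
      have hval : v.val = (w (v.val / M)).val := congrArg Fin.val hvw
      have h6 := Nat.div_add_mod ((w (v.val / M)).val) M
      rw [hwp _ hlt] at h6
      have h7 := key _ hlt
      have h8 : M * (v.val / M) = (v.val / M) * M := Nat.mul_comm _ _
      omega
    · rintro ⟨i, hit, hvi⟩
      have h6 := Nat.div_add_mod ((w i).val) M
      rw [hwp _ hit] at h6
      have h7 := key _ hit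
      have h8 : M * i = i * M := Nat.mul_comm _ _
      have : v = w i := Fin.ext (by omega)
      rw [this]
      exact hwS i

end Main
section Main2

variable {n : ℕ} {t M : ℕ} {A : Finset ℕ}

lemma almostGallai_colC (hM : 0 < M) (ht : 4 ≤ t)
    (hBeh : ∀ a1 ∈ A, ∀ a2 ∈ A, ∀ a3 ∈ A, ∀ l mu : ℕ, 1 ≤ l → 1 ≤ mu → l + mu ≤ t - 1 →
      l * a1 + mu * a2 = (l + mu) * a3 → a1 = a2 ∧ a1 = a3) :
    AlmostGallai t (colC t M A (n := n)) := by
  intro S T hS hT hne u v huv hu hv hu' hv'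
  obtain ⟨x, a, haA, hxa, hSiff⟩ := rainbow_structure hM ht hBeh hS
  obtain ⟨x', a', ha'A, hxa', hTiff⟩ := rainbow_structure hM ht hBeh hT
  obtain ⟨i, hit, hui⟩ := (hSiff u).mp hu
  obtain ⟨i', hit', hui'⟩ := (hTiff u).mp hu'
  obtain ⟨j, hjt, hvj⟩ := (hSiff v).mp hv
  obtain ⟨j', hjt', hvj'⟩ := (hTiff v).mp hv'
  have hdiv : ∀ (p y : ℕ), y < M → (p * M + y) / M = p := by
    intro p y hy
    rw [mul_comm, Nat.mul_add_div hM, Nat.div_eq_of_lt hy, add_zero]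
  have e1 : i = i' := by
    have d1 : u.val / M = i := by rw [hui]; exact hdiv i _ (hxa i hit)
    have d2 : u.val / M = i' := by rw [hui']; exact hdiv i' _ (hxa' i' hit')
    omega
  have e2 : j = j' := by
    have d1 : v.val / M = j := by rw [hvj]; exact hdiv j _ (hxa j hjt)
    have d2 : v.val / M = j' := by rw [hvj']; exact hdiv j' _ (hxa' j' hjt')
    omega
  subst e1; subst e2
  have q1 : x + i * a = x' + i * a' := by omega
  have q2 : x + j * a = x' + j * a' := by omega
  have hij : i ≠ j := by
    intro h
    subst h
    exact huv (Fin.ext (by omega))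
  have hz : ((i:ℤ) - j) * ((a:ℤ) - a') = 0 := by
    have z1 : (x:ℤ) + i * a = x' + i * a' := by exact_mod_cast q1
    have z2 : (x:ℤ) + j * a = x' + j * a' := by exact_mod_cast q2
    linear_combination z1 - z2
  have haa : a = a' := by
    rcases mul_eq_zero.mp hz with h | h
    · exact absurd (by exact_mod_cast sub_eq_zero.mp h) hij
    · exact_mod_cast sub_eq_zero.mp h
  subst haa
  have hxx : x = x' := by omega
  subst hxx
  apply hne
  ext vv
  rw [hSiff vv, hTiff vv]

/-- the clique on `{(i, x + i a) : i < t}` as a finset of `Fin n` -/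
def blockF (n t M : ℕ) (hn : 0 < n) (x a : ℕ) : Finset (Fin n) :=
  (Finset.range t).image (fun i => ⟨(i * M + (x + i * a)) % n, Nat.mod_lt _ hn⟩)

lemma mem_blockF (hn : 0 < n) {x a : ℕ}
    (hb : ∀ i, i < t → i * M + (x + i * a) < n) (v : Fin n) :
    v ∈ blockF n t M hn x a ↔ ∃ i, i < t ∧ v.val = i * M + (x + i * a) := by
  unfold blockF
  rw [Finset.mem_image]
  constructor
  · rintro ⟨i, hi, rfl⟩
    rw [Finset.mem_range] at hi
    exact ⟨i, hi, by simp [Nat.mod_eq_of_lt (hb i hi)]⟩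
  · rintro ⟨i, hi, hv⟩
    refine ⟨i, Finset.mem_range.mpr hi, ?_⟩
    apply Fin.ext
    simp [Nat.mod_eq_of_lt (hb i hi), hv]

lemma blockF_rainbow (hn : 0 < n) (hM : 0 < M) (ht : 2 ≤ t)
    (htM : t * M ≤ n) {x a : ℕ} (haA : a ∈ A) (hxa : ∀ i, i < t → x + i * a < M) :
    IsRainbowClique t (colC t M A) (blockF n t M hn x a) := by
  have hbM : ∀ i, i < t → i * M + (x + i * a) < t * M := by
    intro i hi
    have := hxa i hi
    have h1 : i * M + (x + i * a) < (i+1) * M := by rw [add_one_mul]; omega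
    have h2 : (i+1) * M ≤ t * M := Nat.mul_le_mul_right M (by omega)
    omega
  have hb : ∀ i, i < t → i * M + (x + i * a) < n := fun i hi => lt_of_lt_of_le (hbM i hi) htM
  set f : ℕ → Fin n := fun i => ⟨(i * M + (x + i * a)) % n, Nat.mod_lt _ hn⟩ with hf
  have hfval : ∀ i, i < t → (f i).val = i * M + (x + i * a) := by
    intro i hi; simp [hf, Nat.mod_eq_of_lt (hb i hi)]
  have hfdiv : ∀ i, i < t → (f i).val / M = i := by
    intro i hi
    rw [hfval i hi, mul_comm, Nat.mul_add_div hM, Nat.div_eq_of_lt (hxa i hi), add_zero]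
  have hfmod : ∀ i, i < t → (f i).val % M = x + i * a := by
    intro i hi
    rw [hfval i hi, mul_comm, Nat.mul_add_mod, Nat.mod_eq_of_lt (hxa i hi)]
  have hrel : ∀ i j, i < j → j < t → rel t M A (f i) (f j) := by
    intro i j hij hjt
    refine ⟨?_, ?_, ?_, a, haA, ?_⟩
    · rw [hfval i (by omega)]; exact hbM i (by omega)
    · rw [hfval j hjt]; exact hbM j hjt
    · rw [hfdiv i (by omega), hfdiv j hjt]; exact hij
    · rw [hfmod i (by omega), hfmod j hjt, hfdiv i (by omega), hfdiv j hjt]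
      have h5 : i * a + (j - i) * a = j * a := by
        rw [← Nat.add_mul]
        congr 1
        omega
      omega
  have hcol : ∀ i j, i < t → j < t → i ≠ j →
      col t M A (f i) (f j) = pc (min i j) (max i j) := by
    intro i j hi hj hij
    rcases Nat.lt_or_ge i j with h | h
    · rw [col_of_rel t M A (hrel i j h hj), hfdiv i hi, hfdiv j hj,
        Nat.min_eq_left (le_of_lt h), Nat.max_eq_right (le_of_lt h)]
    · have h' : j < i := by omega
      rw [col_symm, col_of_rel t M A (hrel j i h' hi), hfdiv j hj, hfdiv i hi,
        Nat.min_eq_right (le_of_lt h'), Nat.max_eq_left (le_of_lt h')]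
  have hfinj : ∀ i j, i < t → j < t → f i = f j → i = j := by
    intro i j hi hj h
    rw [← hfdiv i hi, ← hfdiv j hj, h]
  constructor
  · rw [show blockF n t M hn x a = (Finset.range t).image f from rfl,
      Finset.card_image_of_injOn, Finset.card_range]
    intro i hi j hj h
    exact hfinj i j (Finset.mem_range.mp hi) (Finset.mem_range.mp hj) h
  · intro p hp q hq r hr s hs hpq hrs hnee
    obtain ⟨ip, hip, hpe⟩ := (mem_blockF hn hb p).mp hp
    obtain ⟨iq, hiq, hqe⟩ := (mem_blockF hn hb q).mp hq
    obtain ⟨ir, hir, hre⟩ := (mem_blockF hn hb r).mp hr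
    obtain ⟨is', his, hse⟩ := (mem_blockF hn hb s).mp hs
    have hpf : p = f ip := Fin.ext (by rw [hpe, hfval ip hip])
    have hqf : q = f iq := Fin.ext (by rw [hqe, hfval iq hiq])
    have hrf : r = f ir := Fin.ext (by rw [hre, hfval ir hir])
    have hsf : s = f is' := Fin.ext (by rw [hse, hfval is' his])
    have hne1 : ip ≠ iq := fun h => hpq (by rw [hpf, hqf, h])
    have hne2 : ir ≠ is' := fun h => hrs (by rw [hrf, hsf, h])
    have e1 : colC t M A s(p, q) = pc (min ip iq) (max ip iq) := by
      rw [hpf, hqf, colC_mk]; exact hcol ip iq hip hiq hne1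
    have e2 : colC t M A s(r, s) = pc (min ir is') (max ir is') := by
      rw [hrf, hsf, colC_mk]; exact hcol ir is' hir his hne2
    rw [e1, e2]
    intro heq
    have hmin : min ip iq < max ip iq := by omega
    have hmin2 : min ir is' < max ir is' := by omega
    obtain ⟨hh1, hh2⟩ := pc_inj hmin hmin2 heq
    apply hnee
    have hcases : (ip = ir ∧ iq = is') ∨ (ip = is' ∧ iq = ir) := by omega
    rcases hcases with ⟨g1, g2⟩ | ⟨g1, g2⟩
    · rw [hpf, hqf, hrf, hsf, g1, g2]
    · rw [hpf, hqf, hrf, hsf, g1, g2]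
      exact Sym2.eq_swap

lemma count_lower (hn : 0 < n) (hM : 0 < M) (ht : 4 ≤ t) (htM : t * M ≤ n)
    (mm : ℕ) (hmm : ∀ x a, x < mm → a ∈ A → ∀ i, i < t → x + i * a < M) :
    mm * A.card ≤ rainbowCount t (colC t M A (n := n)) := by
  classical
  have hfin : ({S : Finset (Fin n) | IsRainbowClique t (colC t M A) S}).Finite :=
    Set.toFinite _
  rw [rainbowCount, Set.ncard_eq_toFinset_card _ hfin]
  set P : Finset (ℕ × ℕ) := Finset.range mm ×ˢ A with hP
  have hinj : Set.InjOn (fun p : ℕ × ℕ => blockF n t M hn p.1 p.2) ↑P := by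
    rintro ⟨x, a⟩ hxa ⟨x', a'⟩ hx'a' he
    simp only [hP, Finset.coe_product, Set.mem_prod, Finset.mem_coe, Finset.mem_range] at hxa hx'a'
    obtain ⟨hx, ha⟩ := hxa
    obtain ⟨hx', ha'⟩ := hx'a'
    simp only at he
    have hb : ∀ i, i < t → i * M + (x + i * a) < n := by
      intro i hi
      have h1 := hmm x a hx ha i hi
      have h2 : i * M + (x + i * a) < (i+1) * M := by rw [add_one_mul]; omega
      have h3 : (i+1) * M ≤ t * M := Nat.mul_le_mul_right M (by omega)
      omega
    have hb' : ∀ i, i < t → i * M + (x' + i * a') < n := by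
      intro i hi
      have h1 := hmm x' a' hx' ha' i hi
      have h2 : i * M + (x' + i * a') < (i+1) * M := by rw [add_one_mul]; omega
      have h3 : (i+1) * M ≤ t * M := Nat.mul_le_mul_right M (by omega)
      omega
    have m1 : ∀ i, i < t → ∃ j, j < t ∧ i * M + (x + i * a) = j * M + (x' + j * a') := by
      intro i hi
      have hv : (⟨i * M + (x + i * a), hb i hi⟩ : Fin n) ∈ blockF n t M hn x a :=
        (mem_blockF hn hb _).mpr ⟨i, hi, rfl⟩
      rw [he] at hv
      obtain ⟨j, hj, hje⟩ := (mem_blockF hn hb' _).mp hv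
      exact ⟨j, hj, hje⟩
    obtain ⟨j0, hj0, he0⟩ := m1 0 (by omega)
    obtain ⟨j1, hj1, he1⟩ := m1 1 (by omega)
    have hxM := hmm x a hx ha 0 (by omega)
    have hxaM := hmm x a hx ha 1 (by omega)
    have hx'M := hmm x' a' hx' ha' 0 (by omega)
    have hx'aM := hmm x' a' hx' ha' 1 (by omega)
    simp only [Nat.zero_mul, Nat.one_mul, Nat.mul_zero, Nat.mul_one, Nat.zero_add] at he0 he1 hxM hxaM hx'M hx'aM
    have hj00 : j0 = 0 := by
      rcases Nat.eq_zero_or_pos j0 with h | h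
      · exact h
      · have : M ≤ j0 * M := Nat.le_mul_of_pos_left M h
        have : x' + j0 * a' ≥ 0 := Nat.zero_le _
        omega
    subst hj00
    simp only [Nat.zero_mul, Nat.zero_add, Nat.mul_zero, Nat.add_zero] at he0
    subst he0
    have hj11 : j1 = 1 := by
      rcases Nat.lt_or_ge j1 2 with h | h
      · interval_cases j1
        · simp only [Nat.zero_mul, Nat.zero_add, Nat.mul_zero, Nat.add_zero] at he1
          omega
        · rfl
      · have : 2 * M ≤ j1 * M := Nat.mul_le_mul_right M h
        omega
    subst hj11
    simp only [Nat.one_mul, Nat.mul_one] at he1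
    have : a = a' := by omega
    rw [this]
  calc mm * A.card = P.card := by rw [hP, Finset.card_product, Finset.card_range]
    _ = (P.image (fun p : ℕ × ℕ => blockF n t M hn p.1 p.2)).card :=
        (Finset.card_image_of_injOn hinj).symm
    _ ≤ hfin.toFinset.card := by
        apply Finset.card_le_card
        intro Sb hSb
        rw [Set.Finite.mem_toFinset]
        obtain ⟨⟨x, a⟩, hxa, rfl⟩ := Finset.mem_image.mp hSb
        rw [hP, Finset.mem_product, Finset.mem_range] at hxa
        exact blockF_rainbow hn hM (by omega) htM hxa.2
          (fun i hi => hmm x a hxa.1 hxa.2 i hi)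

end Main2
set_option maxHeartbeats 1000000 in
lemma construct (t k n : ℕ) (ht : 4 ≤ t) (hk : 3 ≤ k)
    (hN : t^2 * ((t^2*2^k)^2 * k * (4*t)^k + 4*t + 2)^k ≤ n) :
    ∃ c : Sym2 (Fin n) → ℕ, (∀ e, c e < t.choose 2) ∧ AlmostGallai t c ∧
      ∃ d : ℕ, 0 < d ∧ n ≤ t^2 * 2^k * d^k ∧
        (t^2*2^k)^2 * d^(2*k-3) ≤ rainbowCount t c := by
  classical
  set C0 := (t^2*2^k)^2 * k * (4*t)^k with hC0
  set d := Nat.findGreatest (fun d => t^2 * d^k ≤ n) n with hdd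
  have hCn : C0 + 4*t + 2 ≤ n := by
    calc C0 + 4*t + 2 ≤ (C0+4*t+2)^k := Nat.le_self_pow (by omega) _
      _ ≤ t^2*(C0+4*t+2)^k := Nat.le_mul_of_pos_left _ (by positivity)
      _ ≤ n := hN
  have hd1 : C0 + 4*t + 2 ≤ d := Nat.le_findGreatest (P := fun d => t^2 * d^k ≤ n) hCn hN
  have hdpos : 0 < d := by omega
  have hd2 : t^2 * d^k ≤ n := Nat.findGreatest_spec (P := fun d => t^2 * d^k ≤ n) hCn hN
  have hnpos : 0 < n := by omega
  have ht16 : 16 ≤ t^2 := by nlinarith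
  have hdn : d < n := by
    by_contra h
    have hdle : d ≤ n := Nat.findGreatest_le n
    have hde : d = n := by omega
    have h1 : n ≤ n^k := Nat.le_self_pow (by omega) _
    have h2 : t^2 * n ≤ t^2 * n^k := Nat.mul_le_mul_left _ h1
    rw [hde] at hd2
    nlinarith
  have hd3 : n < t^2 * (d+1)^k := by
    by_contra h
    push_neg at h
    exact absurd h (Nat.findGreatest_is_greatest (P := fun d => t^2 * d^k ≤ n) (n := n) (by omega) (by omega))
  set B := d / (2*t) with hB
  have h2tpos : 0 < 2*t := by omega
  have hB2 : 2 ≤ B := by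
    rw [hB, Nat.le_div_iff_mul_le h2tpos]
    omega
  have h2tB : 2*t*B ≤ d := by
    rw [hB, mul_comm]
    exact Nat.div_mul_le_self d (2*t)
  have hd4tB : d < 4*t*B := by
    have h1 := Nat.div_add_mod d (2*t)
    have h2 : d % (2*t) < 2*t := Nat.mod_lt _ h2tpos
    have h3 : 4*t*B = 2*(2*t*(d/(2*t))) := by rw [hB]; ring
    omega
  have hBd : B ≤ d := Nat.div_le_self _ _
  have hBpos : 0 < B := by omega
  -- the sphere
  set X := Fintype.piFinset (fun _ : Fin k => Finset.range B) with hX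
  have hXcard : X.card = B^k := by
    rw [hX, Fintype.card_piFinset]
    simp [Finset.card_range]
  set nrm : (Fin k → ℕ) → ℕ := fun x => ∑ i, (x i)^2 with hnrm
  have hkB2pos : 0 < k * B^2 := Nat.mul_pos (by omega) (by positivity)
  have hmaps : ∀ x ∈ X, nrm x ∈ Finset.range (k * B^2) := by
    intro x hx
    rw [Finset.mem_range]
    have hxi : ∀ i, x i < B := by
      intro i
      have := Fintype.mem_piFinset.mp hx i
      rwa [Finset.mem_range] at this
    have h1 : nrm x ≤ ∑ _i : Fin k, (B-1)^2 := by
      apply Finset.sum_le_sum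
      intro i _
      have := hxi i
      exact Nat.pow_le_pow_left (by omega) 2
    have h2 : (∑ _i : Fin k, (B-1)^2) = k * (B-1)^2 := by
      rw [Finset.sum_const, Finset.card_univ, Fintype.card_fin, smul_eq_mul]
    have h3 : k * (B-1)^2 < k * B^2 := by
      have h4 : (B-1)^2 < B^2 := Nat.pow_lt_pow_left (by omega) (by omega)
      exact mul_lt_mul_of_pos_left h4 (by omega)
    omega
  obtain ⟨r, hr, hrmax⟩ := Finset.exists_max_image (Finset.range (k*B^2))
    (fun b => (X.filter (fun x => nrm x = b)).card)
    ⟨0, Finset.mem_range.mpr hkB2pos⟩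
  set sph := X.filter (fun x => nrm x = r) with hsph
  have hpig : B^k ≤ k * B^2 * sph.card := by
    have hsum := Finset.card_eq_sum_card_fiberwise hmaps
    have hbnd := Finset.sum_le_card_nsmul (Finset.range (k*B^2))
      (fun b => (X.filter (fun x => nrm x = b)).card) sph.card
      (fun b hb => hrmax b hb)
    rw [Finset.card_range, smul_eq_mul] at hbnd
    omega
  have hsphB : ∀ x ∈ sph, ∀ i, x i < B := by
    intro x hx i
    have h1 := (Finset.mem_filter.mp hx).1
    have := Fintype.mem_piFinset.mp h1 i
    rwa [Finset.mem_range] at this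
  have hsphr : ∀ x ∈ sph, (∑ i, (x i)^2) = r := fun x hx => (Finset.mem_filter.mp hx).2
  set enc : (Fin k → ℕ) → ℕ := fun x => ∑ i : Fin k, x i * d ^ (i : ℕ) with henc
  set A := sph.image enc with hA
  have hAcard : A.card = sph.card := by
    apply Finset.card_image_of_injOn
    intro x hx y hy h
    exact digits_inj k d hdpos x y (fun i => lt_of_lt_of_le (hsphB x hx i) hBd)
      (fun i => lt_of_lt_of_le (hsphB y hy i) hBd) h
  have hAlt : ∀ a ∈ A, a < d^k := by
    intro a ha
    obtain ⟨x, hx, rfl⟩ := Finset.mem_image.mp ha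
    exact encode_lt k d hdpos x (fun i => lt_of_lt_of_le (hsphB x hx i) hBd)
  -- Behrend property
  have hBeh : ∀ a1 ∈ A, ∀ a2 ∈ A, ∀ a3 ∈ A, ∀ l mu : ℕ, 1 ≤ l → 1 ≤ mu → l + mu ≤ t - 1 →
      l * a1 + mu * a2 = (l + mu) * a3 → a1 = a2 ∧ a1 = a3 := by
    intro a1 ha1 a2 ha2 a3 ha3 l mu hl hmu hlmu heq
    obtain ⟨x1, hx1, he1⟩ := Finset.mem_image.mp ha1
    obtain ⟨x2, hx2, he2⟩ := Finset.mem_image.mp ha2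
    obtain ⟨x3, hx3, he3⟩ := Finset.mem_image.mp ha3
    have hdig1 : ∀ i, l * x1 i + mu * x2 i < d := by
      intro i
      have b1 := hsphB x1 hx1 i
      have b2 := hsphB x2 hx2 i
      have : l * x1 i + mu * x2 i ≤ (l + mu) * (B-1) := by
        rw [add_mul]
        exact Nat.add_le_add (Nat.mul_le_mul_left _ (by omega))
          (Nat.mul_le_mul_left _ (by omega))
      have h4 : (l + mu) * (B-1) ≤ (t-1)*(B-1) := Nat.mul_le_mul_right _ hlmu
      have h5 : (t-1)*(B-1) < 2*t*B := by
        have h6 : (t-1)*(B-1) ≤ t*B := Nat.mul_le_mul (by omega) (by omega)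
        have h7 : 2*t*B = 2*(t*B) := by ring
        have h8 : 0 < t*B := Nat.mul_pos (by omega) hBpos
        omega
      omega
    have hdig3 : ∀ i, (l + mu) * x3 i < d := by
      intro i
      have b3 := hsphB x3 hx3 i
      have : (l + mu) * x3 i ≤ (t-1) * (B-1) :=
        Nat.mul_le_mul hlmu (by omega)
      have h5 : (t-1)*(B-1) < 2*t*B := by
        have h6 : (t-1)*(B-1) ≤ t*B := Nat.mul_le_mul (by omega) (by omega)
        have h7 : 2*t*B = 2*(t*B) := by ring
        have h8 : 0 < t*B := Nat.mul_pos (by omega) hBpos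
        omega
      omega
    have hsum1 : (∑ i : Fin k, (l * x1 i + mu * x2 i) * d ^ (i:ℕ)) = l * enc x1 + mu * enc x2 := by
      rw [henc]
      simp only
      rw [Finset.mul_sum, Finset.mul_sum, ← Finset.sum_add_distrib]
      apply Finset.sum_congr rfl
      intro i _
      ring
    have hsum3 : (∑ i : Fin k, ((l + mu) * x3 i) * d ^ (i:ℕ)) = (l + mu) * enc x3 := by
      rw [henc]
      simp only
      rw [Finset.mul_sum]
      apply Finset.sum_congr rfl
      intro i _
      ring
    have hdig := digits_inj k d hdpos (fun i => l * x1 i + mu * x2 i)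
      (fun i => (l + mu) * x3 i) hdig1 hdig3
      (by rw [hsum1, hsum3, he1, he2, he3]; exact heq)
    have hpt : ∀ i, l * x1 i + mu * x2 i = (l + mu) * x3 i := fun i => congrFun hdig i
    have hxx : x1 = x2 := sphere_eq x1 x2 x3 l mu r hl hmu hpt
      (hsphr x1 hx1) (hsphr x2 hx2) (hsphr x3 hx3)
    have h12 : a1 = a2 := by rw [← he1, ← he2, hxx]
    refine ⟨h12, ?_⟩
    have h6 : (l + mu) * a1 = (l + mu) * a3 := by
      rw [← heq, h12]
      ring
    exact Nat.eq_of_mul_eq_mul_left (by omega) h6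
  -- the colouring
  set M := t * d^k with hM
  have hMpos : 0 < M := Nat.mul_pos (by omega) (by positivity)
  have htM : t * M ≤ n := by
    have : t * M = t^2 * d^k := by rw [hM]; ring
    omega
  refine ⟨colC t M A, fun e => colC_lt t M A (by omega) hMpos e,
    almostGallai_colC hMpos ht hBeh, d, hdpos, ?_, ?_⟩
  · have h1 : (d+1)^k ≤ (2*d)^k := Nat.pow_le_pow_left (by omega) k
    have h2 : t^2 * (2*d)^k = t^2*2^k*d^k := by rw [mul_pow]; ring
    nlinarith
  · -- the count
    have hcount : d^k * A.card ≤ rainbowCount t (colC t M A (n := n)) := by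
      apply count_lower hnpos hMpos ht htM
      intro x a hx ha i hi
      have h1 : a < d^k := hAlt a ha
      have h2 : i * a ≤ (t-1) * (d^k - 1) := Nat.mul_le_mul (by omega) (by omega)
      have h3 : (t-1)*(d^k-1) + (d^k-1) = t*(d^k-1) := by
        have h4 : (t-1) + 1 = t := by omega
        calc (t-1)*(d^k-1) + (d^k-1) = ((t-1)+1)*(d^k-1) := by rw [add_mul, one_mul]
          _ = t*(d^k-1) := by rw [h4]
      have h5 : t * d^k = t*(d^k - 1) + t := by
        have h6 : d^k = (d^k - 1) + 1 := by
          have : 0 < d^k := by positivity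
          omega
        conv_lhs => rw [h6]
        rw [Nat.mul_add, Nat.mul_one]
      rw [hM]
      omega
    set cnt := rainbowCount t (colC t M A (n := n)) with hcnt
    have s3 : d^k ≤ (4*t*B)^k := Nat.pow_le_pow_left (le_of_lt hd4tB) k
    have s4 : d^(2*k) ≤ (k*B^2*(4*t)^k) * (d^k * A.card) := by
      calc d^(2*k) = d^k * d^k := by rw [← pow_add]; congr 1; omega
        _ ≤ d^k * (4*t*B)^k := Nat.mul_le_mul_left _ s3
        _ = (4*t)^k * (d^k * B^k) := by rw [mul_pow]; ring
        _ ≤ (4*t)^k * (d^k * (k*B^2*A.card)) := by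
            apply Nat.mul_le_mul_left
            apply Nat.mul_le_mul_left
            rw [hAcard]
            exact hpig
        _ = (k*B^2*(4*t)^k) * (d^k * A.card) := by ring
    have s5 : d^(2*k) ≤ (k*d^2*(4*t)^k) * cnt := by
      calc d^(2*k) ≤ (k*B^2*(4*t)^k) * (d^k*A.card) := s4
        _ ≤ (k*d^2*(4*t)^k) * (d^k*A.card) := by
            apply Nat.mul_le_mul_right
            apply Nat.mul_le_mul_right
            exact Nat.mul_le_mul_left _ (Nat.pow_le_pow_left hBd 2)
        _ ≤ (k*d^2*(4*t)^k) * cnt := Nat.mul_le_mul_left _ hcount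
    have s6 : ((t^2*2^k)^2 * d^(2*k-3)) * (k*d^2*(4*t)^k) ≤ cnt * (k*d^2*(4*t)^k) := by
      have e1 : ((t^2*2^k)^2 * d^(2*k-3)) * (k*d^2*(4*t)^k) = C0 * (d^(2*k-3) * d^2) := by
        rw [hC0]; ring
      have e2 : d^(2*k-3) * d^2 = d^(2*k-1) := by
        rw [← pow_add]
        congr 1
        omega
      have e3 : d * d^(2*k-1) = d^(2*k) := by
        rw [← pow_succ']
        congr 1
        omega
      calc ((t^2*2^k)^2 * d^(2*k-3)) * (k*d^2*(4*t)^k) = C0 * d^(2*k-1) := by rw [e1, e2]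
        _ ≤ d * d^(2*k-1) := Nat.mul_le_mul_right _ (by omega)
        _ = d^(2*k) := e3
        _ ≤ (k*d^2*(4*t)^k) * cnt := s5
        _ = cnt * (k*d^2*(4*t)^k) := by ring
    exact Nat.le_of_mul_le_mul_right s6 (by positivity)
theorem tau_lower_bound (t : ℕ) (ht : 4 ≤ t) :
    ∀ ε : ℝ, 0 < ε → ∃ N : ℕ, ∀ n : ℕ, N ≤ n →
      ∃ c : Sym2 (Fin n) → ℕ, (∀ e, c e < t.choose 2) ∧ AlmostGallai t c ∧
        (n : ℝ) ^ ((2 : ℝ) - ε) ≤ (rainbowCount t c : ℝ) := by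
  intro ε hε
  set ε' : ℝ := min ε 1 with hε'def
  have hε'pos : 0 < ε' := lt_min hε one_pos
  have hε'le1 : ε' ≤ 1 := min_le_right _ _
  have hε'leε : ε' ≤ ε := min_le_left _ _
  set k : ℕ := max 3 ⌈(3:ℝ)/ε'⌉₊ with hkdef
  have hk3 : 3 ≤ k := le_max_left _ _
  have hkε : 3 ≤ (k:ℝ) * ε' := by
    have h1 : (3:ℝ)/ε' ≤ (⌈(3:ℝ)/ε'⌉₊ : ℝ) := Nat.le_ceil _
    have h2 : ((⌈(3:ℝ)/ε'⌉₊ : ℕ):ℝ) ≤ (k:ℝ) := by exact_mod_cast le_max_right 3 _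
    have h3 : (3:ℝ)/ε' ≤ (k:ℝ) := le_trans h1 h2
    calc (3:ℝ) = (3/ε') * ε' := by field_simp
      _ ≤ (k:ℝ) * ε' := mul_le_mul_of_nonneg_right h3 (le_of_lt hε'pos)
  refine ⟨max 1 (t^2 * ((t^2*2^k)^2 * k * (4*t)^k + 4*t + 2)^k), ?_⟩
  intro n hn
  obtain ⟨c, hc1, hc2, d, hdpos, hnle, hcnt⟩ :=
    construct t k n ht hk3 (le_trans (le_max_right _ _) hn)
  refine ⟨c, hc1, hc2, ?_⟩
  have hn1 : (1:ℝ) ≤ (n:ℝ) := by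
    have : 1 ≤ n := le_trans (le_max_left _ _) hn
    exact_mod_cast this
  have hd1 : (1:ℝ) ≤ (d:ℝ) := by exact_mod_cast hdpos
  set C3 : ℕ := t^2*2^k with hC3def
  have hC3pos : 0 < C3 := by
    rw [hC3def]
    exact Nat.mul_pos (Nat.pow_pos (by omega)) (Nat.pow_pos (by omega))
  have hC31 : (1:ℝ) ≤ (C3:ℝ) := by exact_mod_cast hC3pos
  have hexp0 : (0:ℝ) ≤ 2 - ε' := by linarith
  have step1 : (n:ℝ)^((2:ℝ)-ε) ≤ (n:ℝ)^((2:ℝ)-ε') :=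
    Real.rpow_le_rpow_of_exponent_le hn1 (by linarith)
  have hnle' : (n:ℝ) ≤ (C3:ℝ) * (d:ℝ)^k := by
    have h0 : (n:ℝ) ≤ ((t^2*2^k*d^k : ℕ):ℝ) := by exact_mod_cast hnle
    calc (n:ℝ) ≤ ((t^2*2^k*d^k : ℕ):ℝ) := h0
      _ = (C3:ℝ) * (d:ℝ)^k := by rw [hC3def]; push_cast; ring
  have step2 : (n:ℝ)^((2:ℝ)-ε') ≤ ((C3:ℝ) * (d:ℝ)^k)^((2:ℝ)-ε') :=
    Real.rpow_le_rpow (by positivity) hnle' hexp0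
  have step3 : ((C3:ℝ)*(d:ℝ)^k)^((2:ℝ)-ε')
      = (C3:ℝ)^((2:ℝ)-ε') * ((d:ℝ)^k)^((2:ℝ)-ε') :=
    Real.mul_rpow (by positivity) (by positivity)
  have step4 : (C3:ℝ)^((2:ℝ)-ε') ≤ (C3:ℝ)^(((2:ℕ)):ℝ) :=
    Real.rpow_le_rpow_of_exponent_le hC31 (by push_cast; linarith)
  have step5 : ((d:ℝ)^k)^((2:ℝ)-ε') ≤ (d:ℝ)^(((2*k-3:ℕ)):ℝ) := by
    have e1 : ((d:ℝ)^k) = (d:ℝ)^((k:ℕ):ℝ) := (Real.rpow_natCast _ _).symm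
    rw [e1, ← Real.rpow_mul (by positivity)]
    apply Real.rpow_le_rpow_of_exponent_le hd1
    rw [Nat.cast_sub (by omega)]
    push_cast
    nlinarith [hkε]
  have hfin1 : (n:ℝ)^((2:ℝ)-ε) ≤ (C3:ℝ)^(((2:ℕ)):ℝ) * (d:ℝ)^(((2*k-3:ℕ)):ℝ) := by
    calc (n:ℝ)^((2:ℝ)-ε) ≤ (n:ℝ)^((2:ℝ)-ε') := step1
      _ ≤ ((C3:ℝ)*(d:ℝ)^k)^((2:ℝ)-ε') := step2
      _ = (C3:ℝ)^((2:ℝ)-ε') * ((d:ℝ)^k)^((2:ℝ)-ε') := step3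
      _ ≤ (C3:ℝ)^(((2:ℕ)):ℝ) * (d:ℝ)^(((2*k-3:ℕ)):ℝ) :=
          mul_le_mul step4 step5 (by positivity) (by positivity)
  have hfin2 : (C3:ℝ)^(((2:ℕ)):ℝ) * (d:ℝ)^(((2*k-3:ℕ)):ℝ) = ((C3^2 * d^(2*k-3) : ℕ):ℝ) := by
    rw [Real.rpow_natCast, Real.rpow_natCast]
    push_cast
    ring
  have hfin3 : ((C3^2 * d^(2*k-3) : ℕ):ℝ) ≤ (rainbowCount t c : ℝ) := by exact_mod_cast hcnt
  rw [hfin2] at hfin1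
  linarith
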